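/- For any ε > 0 there exists δ > 0 (depending only on ε and q) such that for every two-user q-ary input multiple-access channel P: if I⁽¹⁾(P⁺) − I⁽¹⁾(P) < δ then I⁽¹⁾(P) ∉ (ε, 1−ε); similarly, if I⁽²⁾(P⁺) − I⁽²⁾(P) < δ then I⁽²⁾(P) ∉ (ε, 1−ε). -/

import Mathlib

open Finset

namespace PolarMAC

/-- A two-user `q`-ary input multiple-access channel: an arbitrary finite output
alphabet `Y` together with transition probabilities `P x w y = P(y | x, w)`. -/
structure MAC (q : ℕ) where
  Y : Type
  [fintypeY : Fintype Y]
  P : ZMod q → ZMod q → Y → ℝ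

attribute [instance] MAC.fintypeY

/-- `M` is a genuine MAC: entries nonnegative and rows summing to one. -/
def IsMAC {q : ℕ} [Fact (Nat.Prime q)] (M : MAC q) : Prop :=
  (∀ x w y, 0 ≤ M.P x w y) ∧ ∀ x w, ∑ y, M.P x w y = 1

/-- Entropy (base `q`) of a pmf on a finite type. -/
noncomputable def Hq (q : ℕ) {α : Type*} [Fintype α] (p : α → ℝ) : ℝ :=
  ∑ a, -(p a * Real.logb q (p a))

/-- Mutual information (base `q`) between the two coordinates of a joint pmf. -/
noncomputable def MIq (q : ℕ) {α β : Type*} [Fintype α] [Fintype β] (p : α → β → ℝ) : ℝ :=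
  Hq q (fun a => ∑ b, p a b) + Hq q (fun b => ∑ a, p a b) - Hq q (fun ab : α × β => p ab.1 ab.2)

variable (q : ℕ) [Fact (Nat.Prime q)]

/-- `I⁽¹⁾(P) = I(X; Y W)` for independent uniform inputs. -/
noncomputable def I1 (M : MAC q) : ℝ :=
  MIq q (fun (x : ZMod q) (wy : ZMod q × M.Y) => M.P x wy.1 wy.2 / (q : ℝ) ^ 2)

/-- `I⁽²⁾(P) = I(W; Y X)` for independent uniform inputs. -/
noncomputable def I2 (M : MAC q) : ℝ :=
  MIq q (fun (w : ZMod q) (xy : ZMod q × M.Y) => M.P xy.1 w xy.2 / (q : ℝ) ^ 2)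

/-- `I⁽¹²⁾(P) = I(X W; Y)` for independent uniform inputs. -/
noncomputable def I12 (M : MAC q) : ℝ :=
  MIq q (fun (xw : ZMod q × ZMod q) (y : M.Y) => M.P xw.1 xw.2 y / (q : ℝ) ^ 2)

/-- `K(P) = (I⁽¹⁾(P), I⁽²⁾(P), I⁽¹²⁾(P)) ∈ ℝ³`, with the Euclidean norm. -/
noncomputable def Kvec (M : MAC q) : EuclideanSpace ℝ (Fin 3) :=
  WithLp.toLp 2 ![I1 q M, I2 q M, I12 q M]

/-- The transform `P⁻(y₁,y₂ | u₁,v₁) = q⁻² ∑_{u₂,v₂} P(y₁|u₁+u₂, v₁+v₂) P(y₂|u₂,v₂)`. -/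
noncomputable def minusT (M : MAC q) : MAC q where
  Y := M.Y × M.Y
  P := fun u₁ v₁ y =>
    ((q : ℝ) ^ 2)⁻¹ * ∑ u₂, ∑ v₂, M.P (u₁ + u₂) (v₁ + v₂) y.1 * M.P u₂ v₂ y.2

/-- The transform `P⁺(y₁,y₂,u₁,v₁ | u₂,v₂) = q⁻² P(y₁|u₁+u₂, v₁+v₂) P(y₂|u₂,v₂)`,
with output `((y₁, y₂), (u₁, v₁))`. -/
noncomputable def plusT (M : MAC q) : MAC q where
  Y := (M.Y × M.Y) × ZMod q × ZMod q
  P := fun u₂ v₂ z =>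
    ((q : ℝ) ^ 2)⁻¹ * (M.P (z.2.1 + u₂) (z.2.2 + v₂) z.1.1 * M.P u₂ v₂ z.1.2)



open Real


noncomputable def ent {α : Type*} [Fintype α] (p : α → ℝ) : ℝ := ∑ a, Real.negMulLog (p a)

def IsPMF {α : Type*} [Fintype α] (p : α → ℝ) : Prop := (∀ a, 0 ≤ p a) ∧ ∑ a, p a = 1

lemma Hq_eq (q : ℕ) {α : Type*} [Fintype α] (p : α → ℝ) :
    (∑ a, -(p a * Real.logb q (p a))) = ent p / Real.log q := by
  unfold ent Real.negMulLog Real.logb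
  rw [Finset.sum_div]
  exact Finset.sum_congr rfl fun a _ => by ring

lemma ent_comp_equiv {α β : Type*} [Fintype α] [Fintype β] (e : α ≃ β) (p : β → ℝ) :
    ent (fun a => p (e a)) = ent p :=
  Fintype.sum_equiv e _ _ (fun _ => rfl)

lemma ent_prod {α β : Type*} [Fintype α] [Fintype β] (a : α → ℝ) (b : β → ℝ)
    (ha : ∑ x, a x = 1) (hb : ∑ y, b y = 1) :
    ent (fun xy : α × β => a xy.1 * b xy.2) = ent a + ent b := by
  unfold ent
  rw [Fintype.sum_prod_type]
  have : ∀ x, ∑ y, Real.negMulLog (a x * b y)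
      = Real.negMulLog (a x) * (∑ y, b y) + a x * ent b := by
    intro x
    unfold ent
    rw [Finset.mul_sum, Finset.mul_sum, ← Finset.sum_add_distrib]
    exact Finset.sum_congr rfl fun y _ => by rw [Real.negMulLog_mul]; ring
  simp only [this, hb, mul_one]
  rw [Finset.sum_add_distrib, ← Finset.sum_mul, ha]
  simp [ent]

/-- Chain rule / conditional decomposition of entropy. -/
lemma ent_decomp {α β : Type*} [Fintype α] [Fintype β] (pj : α × β → ℝ)
    (hnn : ∀ ab, 0 ≤ pj ab) (post : β → α → ℝ)
    (hpost : ∀ b, (∑ a, pj (a, b)) ≠ 0 → ∀ a, post b a = pj (a, b) / ∑ a, pj (a, b)) :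
    ent pj = ent (fun b => ∑ a, pj (a, b)) + ∑ b, (∑ a, pj (a, b)) * ent (post b) := by
  unfold ent
  rw [Fintype.sum_prod_type, Finset.sum_comm, ← Finset.sum_add_distrib]
  refine Finset.sum_congr rfl fun b _ => ?_
  by_cases hm : (∑ a, pj (a, b)) = 0
  · have hz : ∀ a, pj (a, b) = 0 := by
      intro a
      have := (Finset.sum_eq_zero_iff_of_nonneg (fun a _ => hnn (a, b))).1 hm
      exact this a (Finset.mem_univ a)
    simp [hz, hm]
  · have hpj : ∀ a, pj (a, b) = (∑ a, pj (a, b)) * post b a := by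
      intro a; rw [hpost b hm a, mul_div_cancel₀ _ hm]
    have hsum : ∑ a, post b a = 1 := by
      rw [funext fun a => hpost b hm a, ← Finset.sum_div, div_self hm]
    calc ∑ a, Real.negMulLog (pj (a, b))
        = ∑ a, (post b a * Real.negMulLog (∑ a, pj (a, b))
            + (∑ a, pj (a, b)) * Real.negMulLog (post b a)) := by
          refine Finset.sum_congr rfl fun a _ => ?_
          rw [hpj a, Real.negMulLog_mul]
      _ = Real.negMulLog (∑ a, pj (a, b)) + (∑ a, pj (a, b)) * ∑ a, Real.negMulLog (post b a) := by
          rw [Finset.sum_add_distrib, ← Finset.sum_mul, hsum, one_mul, ← Finset.mul_sum]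

section conv
variable {q : ℕ} [NeZero q]

noncomputable def cnv (p r : ZMod q → ℝ) : ZMod q → ℝ := fun u => ∑ x, p (u + x) * r x

lemma sum_shift (p : ZMod q → ℝ) (c : ZMod q) : ∑ u, p (u + c) = ∑ u, p u :=
  Fintype.sum_equiv (Equiv.addRight c) _ _ (fun _ => rfl)

lemma ent_shift (p : ZMod q → ℝ) (c : ZMod q) :
    ∑ u, Real.negMulLog (p (u + c)) = ent p :=
  Fintype.sum_equiv (Equiv.addRight c) _ _ (fun _ => rfl)

lemma cnv_isPMF {p r : ZMod q → ℝ} (hp : IsPMF p) (hr : IsPMF r) : IsPMF (cnv p r) := by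
  constructor
  · intro u
    exact Finset.sum_nonneg fun x _ => mul_nonneg (hp.1 _) (hr.1 _)
  · unfold cnv
    rw [Finset.sum_comm]
    have : ∀ x : ZMod q, ∑ u, p (u + x) * r x = r x := by
      intro x; rw [← Finset.sum_mul, sum_shift p x, hp.2, one_mul]
    simp only [this, hr.2]

lemma ent_le_cnv_left {p r : ZMod q → ℝ} (hp : IsPMF p) (hr : IsPMF r) :
    ent p ≤ ent (cnv p r) := by
  have jensen : ∀ u : ZMod q, ∑ x, r x • Real.negMulLog (p (u + x))
      ≤ Real.negMulLog (∑ x, r x • p (u + x)) := by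
    intro u
    exact Real.concaveOn_negMulLog.le_map_sum (fun x _ => hr.1 x) hr.2
      (fun x _ => Set.mem_Ici.2 (hp.1 _))
  calc ent p = ∑ x, r x * ∑ u, Real.negMulLog (p (u + x)) := by
        simp only [ent_shift p, ← Finset.sum_mul, hr.2, one_mul]
    _ = ∑ u, ∑ x, r x • Real.negMulLog (p (u + x)) := by
        rw [Finset.sum_comm]
        exact Finset.sum_congr rfl fun x _ => Finset.mul_sum _ _ _
    _ ≤ ∑ u, Real.negMulLog (∑ x, r x • p (u + x)) := Finset.sum_le_sum fun u _ => jensen u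
    _ = ent (cnv p r) := by
        unfold ent cnv
        exact Finset.sum_congr rfl fun u _ => by
          congr 1; exact Finset.sum_congr rfl fun x _ => (mul_comm _ _)

lemma cnv_eq_alt (p r : ZMod q → ℝ) (u : ZMod q) : cnv p r u = ∑ v, p v * r (v - u) :=
  Fintype.sum_equiv (Equiv.addLeft u) _ _ (fun x => by simp)

lemma ent_le_cnv_right {p r : ZMod q → ℝ} (hp : IsPMF p) (hr : IsPMF r) :
    ent r ≤ ent (cnv p r) := by
  have hshift : ∀ v : ZMod q, ∑ u, Real.negMulLog (r (v - u)) = ent r := by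
    intro v
    exact Fintype.sum_equiv (Equiv.subLeft v) _ _ (fun u => rfl)
  have jensen : ∀ u : ZMod q, ∑ v, p v • Real.negMulLog (r (v - u))
      ≤ Real.negMulLog (∑ v, p v • r (v - u)) := by
    intro u
    exact Real.concaveOn_negMulLog.le_map_sum (fun v _ => hp.1 v) hp.2
      (fun v _ => Set.mem_Ici.2 (hr.1 _))
  calc ent r = ∑ v, p v * ∑ u, Real.negMulLog (r (v - u)) := by
        simp only [hshift, ← Finset.sum_mul, hp.2, one_mul]
    _ = ∑ u, ∑ v, p v • Real.negMulLog (r (v - u)) := by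
        rw [Finset.sum_comm]
        exact Finset.sum_congr rfl fun v _ => Finset.mul_sum _ _ _
    _ ≤ ∑ u, Real.negMulLog (∑ v, p v • r (v - u)) := Finset.sum_le_sum fun u _ => jensen u
    _ = ent (cnv p r) := by
        unfold ent
        exact Finset.sum_congr rfl fun u _ => by rw [cnv_eq_alt]; rfl

lemma ent_uniform : ent (fun _ : ZMod q => (q : ℝ)⁻¹) = Real.log q := by
  have hq : (0:ℝ) < q := by
    exact_mod_cast Nat.pos_of_ne_zero (NeZero.ne q)
  unfold ent
  rw [Finset.sum_const, Finset.card_univ, ZMod.card q, Real.negMulLog, Real.log_inv]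
  field_simp
  rw [nsmul_eq_mul]
  field_simp

lemma ent_nonneg {p : ZMod q → ℝ} (hp : IsPMF p) : 0 ≤ ent p := by
  refine Finset.sum_nonneg fun a _ => Real.negMulLog_nonneg (hp.1 a) ?_
  calc p a ≤ ∑ x, p x := Finset.single_le_sum (fun x _ => hp.1 x) (Finset.mem_univ a)
    _ = 1 := hp.2

lemma ent_le_log {p : ZMod q → ℝ} (hp : IsPMF p) : ent p ≤ Real.log q := by
  have hu : IsPMF (fun _ : ZMod q => (q : ℝ)⁻¹) := by
    constructor
    · intro _; positivity
    · rw [Finset.sum_const, Finset.card_univ, ZMod.card q, nsmul_eq_mul]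
      have hq : (q:ℝ) ≠ 0 := by exact_mod_cast (NeZero.ne q)
      field_simp
  have h := ent_le_cnv_right hu hp
  have : cnv (fun _ : ZMod q => (q : ℝ)⁻¹) p = fun _ => (q:ℝ)⁻¹ := by
    funext u
    unfold cnv
    rw [← Finset.mul_sum]
    simp [hp.2]
  rw [this, ent_uniform] at h
  exact h

end conv

section strict
variable {q : ℕ} [Fact (Nat.Prime q)]

lemma exists_two_support {r : ZMod q → ℝ} (hr : IsPMF r) (hent : 0 < ent r) :
    ∃ x₀ x₁ : ZMod q, x₀ ≠ x₁ ∧ 0 < r x₀ ∧ 0 < r x₁ := by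
  by_contra h
  push_neg at h
  -- there is a point of positive mass
  have hex : ∃ a, r a ≠ 0 := by
    by_contra hz
    push_neg at hz
    have := hr.2
    simp [hz] at this
  obtain ⟨a₀, ha₀⟩ := hex
  have ha₀p : 0 < r a₀ := lt_of_le_of_ne (hr.1 a₀) (Ne.symm ha₀)
  have hzero : ∀ a, a ≠ a₀ → r a = 0 := by
    intro a ha
    exact le_antisymm (h a₀ a (Ne.symm ha) ha₀p) (hr.1 a)
  have hone : r a₀ = 1 := by
    have := hr.2
    rwa [Finset.sum_eq_single a₀ (fun b _ hb => hzero b hb) (fun h => absurd (Finset.mem_univ a₀) h)] at this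
  have : ent r = 0 := by
    unfold ent
    refine Finset.sum_eq_zero fun a _ => ?_
    by_cases ha : a = a₀
    · rw [ha, hone]; simp
    · rw [hzero a ha]; simp
  rw [this] at hent; exact lt_irrefl 0 hent

lemma shift_invariant_const {p : ZMod q → ℝ} {d : ZMod q} (hd : d ≠ 0)
    (hinv : ∀ v, p (v + d) = p v) : ∀ v, p v = p 0 := by
  have hq : q ≠ 0 := (Fact.out : Nat.Prime q).ne_zero
  haveI : NeZero q := ⟨hq⟩
  have hnat : ∀ n : ℕ, p ((n : ZMod q) * d) = p 0 := by
    intro n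
    induction n with
    | zero => simp
    | succ n ih =>
      have : ((n + 1 : ℕ) : ZMod q) * d = (n : ZMod q) * d + d := by push_cast; ring
      rw [this, hinv, ih]
  intro v
  have hfield : v = ((v * d⁻¹).val : ZMod q) * d := by
    rw [ZMod.natCast_val, ZMod.cast_id]
    field_simp
  rw [hfield, hnat]

lemma ent_cnv_strict {p r : ZMod q → ℝ} (hp : IsPMF p) (hr : IsPMF r)
    (hpl : ent p < Real.log q) (hrp : 0 < ent r) : ent p < ent (cnv p r) := by
  classical
  have hq : q ≠ 0 := (Fact.out : Nat.Prime q).ne_zero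
  haveI : NeZero q := ⟨hq⟩
  obtain ⟨x₀, x₁, hne, hr₀, hr₁⟩ := exists_two_support hr hrp
  -- find a coordinate where shifted versions differ
  have hexu : ∃ u : ZMod q, p (u + x₀) ≠ p (u + x₁) := by
    by_contra h
    push_neg at h
    have hinv : ∀ v, p (v + (x₁ - x₀)) = p v := by
      intro v
      have := h (v - x₀)
      have e0 : v - x₀ + x₀ = v := by ring
      have e1 : v - x₀ + x₁ = v + (x₁ - x₀) := by ring
      rw [e0, e1] at this
      exact this.symm
    have hconst := shift_invariant_const (sub_ne_zero.2 (Ne.symm hne)) hinv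
    have hval : p 0 = (q : ℝ)⁻¹ := by
      have : ∑ v : ZMod q, p v = (Fintype.card (ZMod q)) * p 0 := by
        rw [Finset.sum_congr rfl (fun v _ => hconst v), Finset.sum_const, Finset.card_univ,
          nsmul_eq_mul]
      rw [hp.2, ZMod.card q] at this
      have hq' : (q : ℝ) ≠ 0 := by exact_mod_cast hq
      field_simp at this ⊢
      linarith
    have : ent p = Real.log q := by
      have : p = fun _ => (q:ℝ)⁻¹ := funext fun v => by rw [hconst v, hval]
      rw [this, ent_uniform]
    rw [this] at hpl; exact lt_irrefl _ hpl
  obtain ⟨u₀, hu₀⟩ := hexu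
  -- support of r
  set S : Finset (ZMod q) := Finset.univ.filter (fun x => r x ≠ 0) with hS
  have hmemS : ∀ x, 0 < r x → x ∈ S := fun x hx =>
    Finset.mem_filter.2 ⟨Finset.mem_univ x, ne_of_gt hx⟩
  have hSpos : ∀ x ∈ S, 0 < r x := fun x hx =>
    lt_of_le_of_ne (hr.1 x) (Ne.symm (Finset.mem_filter.1 hx).2)
  have hSsum : ∑ x ∈ S, r x = 1 := by
    rw [Finset.sum_filter_ne_zero, hr.2]
  have hSsum' : ∀ (f : ZMod q → ℝ), ∑ x ∈ S, r x * f x = ∑ x, r x * f x := by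
    intro f
    refine Finset.sum_subset (Finset.subset_univ S) fun x _ hx => ?_
    have : r x = 0 := by
      by_contra hxx
      exact hx (Finset.mem_filter.2 ⟨Finset.mem_univ x, hxx⟩)
    rw [this, zero_mul]
  -- pointwise Jensen, strict at u₀
  have hjen : ∀ u : ZMod q, ∑ x ∈ S, r x • Real.negMulLog (p (u + x))
      ≤ Real.negMulLog (cnv p r u) := by
    intro u
    have : cnv p r u = ∑ x ∈ S, r x • p (u + x) := by
      unfold cnv
      simp only [smul_eq_mul]
      rw [hSsum' (fun x => p (u + x))]
      exact Finset.sum_congr rfl fun x _ => mul_comm _ _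
    rw [this]
    exact Real.concaveOn_negMulLog.le_map_sum (fun x hx => (hSpos x hx).le) hSsum
      (fun x _ => Set.mem_Ici.2 (hp.1 _))
  have hjen₀ : ∑ x ∈ S, r x • Real.negMulLog (p (u₀ + x))
      < Real.negMulLog (cnv p r u₀) := by
    have : cnv p r u₀ = ∑ x ∈ S, r x • p (u₀ + x) := by
      unfold cnv
      simp only [smul_eq_mul]
      rw [hSsum' (fun x => p (u₀ + x))]
      exact Finset.sum_congr rfl fun x _ => mul_comm _ _
    rw [this]
    exact Real.strictConcaveOn_negMulLog.lt_map_sum hSpos hSsum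
      (fun x _ => Set.mem_Ici.2 (hp.1 _))
      ⟨x₀, hmemS _ hr₀, x₁, hmemS _ hr₁, hu₀⟩
  have hlt : ∑ u, ∑ x ∈ S, r x • Real.negMulLog (p (u + x)) < ∑ u, Real.negMulLog (cnv p r u) :=
    Finset.sum_lt_sum (fun u _ => hjen u) ⟨u₀, Finset.mem_univ u₀, hjen₀⟩
  have heq : ∑ u, ∑ x ∈ S, r x • Real.negMulLog (p (u + x)) = ent p := by
    rw [Finset.sum_comm]
    simp only [smul_eq_mul]
    calc ∑ x ∈ S, ∑ u, r x * Real.negMulLog (p (u + x))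
        = ∑ x ∈ S, r x * ent p := by
          refine Finset.sum_congr rfl fun x _ => ?_
          rw [← Finset.mul_sum, ent_shift]
      _ = ent p := by rw [← Finset.sum_mul, hSsum, one_mul]
  rw [heq] at hlt
  exact hlt
end strict

section compactness
variable {q : ℕ} [Fact (Nat.Prime q)]

lemma isPMF_iff_mem_simplex (p : ZMod q → ℝ) : IsPMF p ↔ p ∈ stdSimplex ℝ (ZMod q) := by
  haveI : NeZero q := ⟨(Fact.out : Nat.Prime q).ne_zero⟩
  constructor
  · intro h; exact ⟨h.1, h.2⟩
  · intro h; exact ⟨h.1, h.2⟩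

lemma continuous_ent : Continuous (fun p : ZMod q → ℝ => ent p) := by
  haveI : NeZero q := ⟨(Fact.out : Nat.Prime q).ne_zero⟩
  exact continuous_finset_sum _ fun a _ =>
    Real.continuous_negMulLog.comp (continuous_apply a)

lemma continuous_ent_cnv :
    Continuous (fun x : (ZMod q → ℝ) × (ZMod q → ℝ) => ent (cnv x.1 x.2)) := by
  haveI : NeZero q := ⟨(Fact.out : Nat.Prime q).ne_zero⟩
  have : (fun x : (ZMod q → ℝ) × (ZMod q → ℝ) => ent (cnv x.1 x.2))
      = fun x => ∑ u, Real.negMulLog (∑ v, x.1 (u + v) * x.2 v) := rfl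
  rw [this]
  refine continuous_finset_sum _ fun u _ => Real.continuous_negMulLog.comp ?_
  refine continuous_finset_sum _ fun v _ => Continuous.mul ?_ ?_
  · exact (continuous_apply (u + v)).comp continuous_fst
  · exact (continuous_apply v).comp continuous_snd

lemma exists_uniform_gap (c₁ c₂ : ℝ) (hc₁ : c₁ < Real.log q) (hc₂ : 0 < c₂) :
    ∃ c > 0, ∀ p r : ZMod q → ℝ, IsPMF p → IsPMF r → ent p ≤ c₁ → c₂ ≤ ent r →
      ent p + c ≤ ent (cnv p r) := by
  haveI : NeZero q := ⟨(Fact.out : Nat.Prime q).ne_zero⟩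
  classical
  set K : Set ((ZMod q → ℝ) × (ZMod q → ℝ)) :=
    ((stdSimplex ℝ (ZMod q)) ×ˢ (stdSimplex ℝ (ZMod q))) ∩
      ({x | ent x.1 ≤ c₁} ∩ {x | c₂ ≤ ent x.2}) with hK
  have hKc : IsCompact K := by
    refine ((isCompact_stdSimplex ℝ (ZMod q)).prod (isCompact_stdSimplex ℝ (ZMod q))).inter_right ?_
    exact IsClosed.inter (isClosed_le (continuous_ent.comp continuous_fst) continuous_const)
      (isClosed_le continuous_const (continuous_ent.comp continuous_snd))
  by_cases hne : K.Nonempty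
  · set g : (ZMod q → ℝ) × (ZMod q → ℝ) → ℝ := fun x => ent (cnv x.1 x.2) - ent x.1 with hg
    have hgc : Continuous g :=
      continuous_ent_cnv.sub (continuous_ent.comp continuous_fst)
    obtain ⟨x₀, hx₀K, hx₀min⟩ := hKc.exists_isMinOn hne hgc.continuousOn
    have hx₀pmf1 : IsPMF x₀.1 := (isPMF_iff_mem_simplex _).2 hx₀K.1.1
    have hx₀pmf2 : IsPMF x₀.2 := (isPMF_iff_mem_simplex _).2 hx₀K.1.2
    have hgpos : 0 < g x₀ := by
      have := ent_cnv_strict hx₀pmf1 hx₀pmf2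
        (lt_of_le_of_lt hx₀K.2.1 hc₁) (lt_of_lt_of_le hc₂ hx₀K.2.2)
      simpa [hg] using this
    refine ⟨g x₀, hgpos, fun p r hp hr hp1 hr2 => ?_⟩
    have hmem : (p, r) ∈ K :=
      ⟨⟨(isPMF_iff_mem_simplex _).1 hp, (isPMF_iff_mem_simplex _).1 hr⟩, hp1, hr2⟩
    have h2 := hx₀min hmem
    have h3 : ent (cnv x₀.1 x₀.2) - ent x₀.1 ≤ ent (cnv p r) - ent p := h2
    have h4 : g x₀ = ent (cnv x₀.1 x₀.2) - ent x₀.1 := rfl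
    linarith
  · refine ⟨1, one_pos, fun p r hp hr hp1 hr2 => ?_⟩
    exact absurd (⟨⟨(isPMF_iff_mem_simplex _).1 hp, (isPMF_iff_mem_simplex _).1 hr⟩, hp1, hr2⟩ : (p, r) ∈ K)
      (fun h => hne ⟨(p, r), h⟩)
end compactness

section markov
variable {ι : Type*} [Fintype ι]

lemma markov_upper (w v : ι → ℝ) (hw : ∀ i, 0 ≤ w i) (hw1 : ∑ i, w i = 1)
    (hv : ∀ i, 0 ≤ v i) {c m : ℝ} (hc : 0 < c) (hmean : ∑ i, w i * v i ≤ m) :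
    1 - m / c ≤ ∑ i ∈ Finset.univ.filter (fun i => v i ≤ c), w i := by
  classical
  have hsplit := Finset.sum_filter_add_sum_filter_not Finset.univ (fun i => v i ≤ c) w
  have hT : ∑ i ∈ Finset.univ.filter (fun i => ¬ v i ≤ c), w i ≤ m / c := by
    rw [le_div_iff₀ hc]
    calc (∑ i ∈ Finset.univ.filter (fun i => ¬ v i ≤ c), w i) * c
        = ∑ i ∈ Finset.univ.filter (fun i => ¬ v i ≤ c), w i * c := by rw [Finset.sum_mul]
      _ ≤ ∑ i ∈ Finset.univ.filter (fun i => ¬ v i ≤ c), w i * v i := by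
          refine Finset.sum_le_sum fun i hi => ?_
          have := (Finset.mem_filter.1 hi).2
          exact mul_le_mul_of_nonneg_left (le_of_not_ge this) (hw i)
      _ ≤ ∑ i, w i * v i := by
          refine Finset.sum_le_sum_of_subset_of_nonneg (Finset.filter_subset _ _) ?_
          exact fun i _ _ => mul_nonneg (hw i) (hv i)
      _ ≤ m := hmean
  linarith

lemma markov_lower (w v : ι → ℝ) (hw : ∀ i, 0 ≤ w i) (hw1 : ∑ i, w i = 1)
    {L c m : ℝ} (hv0 : ∀ i, 0 ≤ v i) (hvL : ∀ i, v i ≤ L) (hc : 0 ≤ c) (hL : 0 < L)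
    (hmean : m ≤ ∑ i, w i * v i) :
    (m - c) / L ≤ ∑ i ∈ Finset.univ.filter (fun i => c ≤ v i), w i := by
  classical
  have hsplit := Finset.sum_filter_add_sum_filter_not Finset.univ (fun i => c ≤ v i)
      (fun i => w i * v i)
  have h1 : ∑ i ∈ Finset.univ.filter (fun i => c ≤ v i), w i * v i
      ≤ L * ∑ i ∈ Finset.univ.filter (fun i => c ≤ v i), w i := by
    rw [Finset.mul_sum]
    exact Finset.sum_le_sum fun i _ => by
      rw [mul_comm L (w i)]
      exact mul_le_mul_of_nonneg_left (hvL i) (hw i)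
  have h2 : ∑ i ∈ Finset.univ.filter (fun i => ¬ c ≤ v i), w i * v i ≤ c := by
    calc ∑ i ∈ Finset.univ.filter (fun i => ¬ c ≤ v i), w i * v i
        ≤ ∑ i ∈ Finset.univ.filter (fun i => ¬ c ≤ v i), w i * c := by
          refine Finset.sum_le_sum fun i hi => ?_
          have := (Finset.mem_filter.1 hi).2
          exact mul_le_mul_of_nonneg_left (le_of_not_ge this) (hw i)
      _ = (∑ i ∈ Finset.univ.filter (fun i => ¬ c ≤ v i), w i) * c := by rw [Finset.sum_mul]
      _ ≤ 1 * c := by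
          refine mul_le_mul_of_nonneg_right ?_ hc
          rw [← hw1]
          exact Finset.sum_le_sum_of_subset_of_nonneg (Finset.filter_subset _ _)
            (fun i _ _ => hw i)
      _ = c := one_mul c
  rw [div_le_iff₀ hL]
  have := hmean
  rw [← hsplit] at this
  nlinarith [Finset.sum_nonneg (fun i (_ : i ∈ Finset.univ.filter (fun i => c ≤ v i)) => hw i)]
end markov


section macsec
variable {q : ℕ} [Fact (Nat.Prime q)]

lemma Hq_ent {α : Type*} [Fintype α] (p : α → ℝ) : Hq q p = ent p / Real.log q := Hq_eq q p

lemma one_lt_q (q : ℕ) [Fact (Nat.Prime q)] : (1:ℝ) < (q:ℝ) := by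
  exact_mod_cast (Fact.out : Nat.Prime q).one_lt

lemma log_q_pos (q : ℕ) [Fact (Nat.Prime q)] : 0 < Real.log (q:ℝ) :=
  Real.log_pos (one_lt_q q)

lemma q_ne_zero (q : ℕ) [Fact (Nat.Prime q)] : (q:ℝ) ≠ 0 := by
  have := one_lt_q q; linarith

lemma Hq_uniform (q : ℕ) [Fact (Nat.Prime q)] :
    Hq q (fun _ : ZMod q => (q:ℝ)⁻¹) = 1 := by
  haveI : NeZero q := ⟨(Fact.out : Nat.Prime q).ne_zero⟩
  rw [Hq_ent, ent_uniform, div_self (ne_of_gt (log_q_pos q))]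

/-- The joint pmf of `(X, (W, Y))` for uniform independent inputs. -/
noncomputable def jP (M : MAC q) : ZMod q × (ZMod q × M.Y) → ℝ :=
  fun t => M.P t.1 t.2.1 t.2.2 / (q : ℝ) ^ 2

/-- The output marginal (marginal of `(W, Y)`). -/
noncomputable def mg (M : MAC q) : ZMod q × M.Y → ℝ := fun z => ∑ x, jP M (x, z)

/-- Posterior distribution of `X` given the output `(W, Y)`. -/
noncomputable def pst (M : MAC q) : (ZMod q × M.Y) → ZMod q → ℝ :=
  fun z x => if mg M z = 0 then (if x = 0 then 1 else 0) else jP M (x, z) / mg M z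

/-- `H(X | W Y)` in nats. -/
noncomputable def E1e (M : MAC q) : ℝ := ∑ z, mg M z * ent (pst M z)

/-- `H(U₁ | Z₁ Z₂)` in nats. -/
noncomputable def Ecv (M : MAC q) : ℝ :=
  ∑ z₁, ∑ z₂, mg M z₁ * mg M z₂ * ent (cnv (pst M z₁) (pst M z₂))

variable (M : MAC q)

lemma jP_nonneg (hM : IsMAC M) (t) : 0 ≤ jP M t := by
  have := hM.1 t.1 t.2.1 t.2.2
  unfold jP
  positivity

lemma jP_row (hM : IsMAC M) (x : ZMod q) : ∑ z, jP M (x, z) = (q:ℝ)⁻¹ := by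
  haveI : NeZero q := ⟨(Fact.out : Nat.Prime q).ne_zero⟩
  unfold jP
  rw [Fintype.sum_prod_type]
  have : ∀ w : ZMod q, ∑ y, M.P x w y / (q:ℝ)^2 = ((q:ℝ)^2)⁻¹ := by
    intro w
    rw [← Finset.sum_div, hM.2 x w]
    simp [div_eq_mul_inv]
  simp only [this]
  rw [Finset.sum_const, Finset.card_univ, ZMod.card q, nsmul_eq_mul]
  have hq := q_ne_zero q
  field_simp

lemma jP_total (hM : IsMAC M) : ∑ t, jP M t = 1 := by
  haveI : NeZero q := ⟨(Fact.out : Nat.Prime q).ne_zero⟩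
  rw [Fintype.sum_prod_type]
  have : ∀ x : ZMod q, ∑ z, jP M (x, z) = (q:ℝ)⁻¹ := jP_row M hM
  simp only [this]
  rw [Finset.sum_const, Finset.card_univ, ZMod.card q, nsmul_eq_mul]
  exact mul_inv_cancel₀ (q_ne_zero q)

lemma mg_nonneg (hM : IsMAC M) (z) : 0 ≤ mg M z :=
  Finset.sum_nonneg fun x _ => jP_nonneg M hM _

lemma mg_sum (hM : IsMAC M) : ∑ z, mg M z = 1 := by
  unfold mg
  rw [← Finset.sum_comm, ← Fintype.sum_prod_type]
  exact jP_total M hM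

lemma mg_zero (hM : IsMAC M) {z} (h : mg M z = 0) (x : ZMod q) : jP M (x, z) = 0 := by
  have := (Finset.sum_eq_zero_iff_of_nonneg (fun x _ => jP_nonneg M hM (x, z))).1 h
  exact this x (Finset.mem_univ x)

lemma pst_pmf (hM : IsMAC M) (z) : IsPMF (pst M z) := by
  unfold pst
  by_cases h : mg M z = 0
  · simp only [h, if_true, if_pos rfl]
    constructor
    · intro a
      by_cases ha : a = 0 <;> simp [ha]
    · simp
  · simp only [h, if_false]
    constructor
    · intro a; exact div_nonneg (jP_nonneg M hM _) (mg_nonneg M hM z)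
    · rw [← Finset.sum_div]
      exact div_self h

lemma pst_eq {z} (h : mg M z ≠ 0) (x : ZMod q) : pst M z x = jP M (x, z) / mg M z := by
  unfold pst; rw [if_neg h]

lemma ent_jP (hM : IsMAC M) : ent (jP M) = ent (mg M) + E1e M := by
  have := ent_decomp (jP M) (jP_nonneg M hM) (pst M)
    (fun z hz x => pst_eq M hz x)
  exact this

lemma I1_eq (hM : IsMAC M) : I1 q M = 1 - E1e M / Real.log q := by
  have hlog := log_q_pos q
  unfold I1 MIq
  have e1 : (fun x : ZMod q => ∑ wy : ZMod q × M.Y, M.P x wy.1 wy.2 / (q : ℝ) ^ 2)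
      = fun _ : ZMod q => (q:ℝ)⁻¹ := funext fun x => jP_row M hM x
  have e2 : (fun wy : ZMod q × M.Y => ∑ x, M.P x wy.1 wy.2 / (q : ℝ) ^ 2) = mg M := rfl
  have e3 : (fun t : ZMod q × (ZMod q × M.Y) => M.P t.1 t.2.1 t.2.2 / (q : ℝ) ^ 2) = jP M := rfl
  rw [e1, e2, e3, Hq_uniform q, Hq_ent, Hq_ent, ent_jP M hM]
  field_simp
  ring

/-- Equiv used for the full joint of the `+` transform. -/
def eqvG (M : MAC q) :
    (ZMod q × (ZMod q × ((M.Y × M.Y) × ZMod q × ZMod q))) ≃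
      ((ZMod q × (ZMod q × M.Y)) × (ZMod q × (ZMod q × M.Y))) where
  toFun t := ((t.2.2.2.1 + t.1, (t.2.2.2.2 + t.2.1, t.2.2.1.1)), (t.1, (t.2.1, t.2.2.1.2)))
  invFun s := (s.2.1, (s.2.2.1, ((s.1.2.2, s.2.2.2), (s.1.1 - s.2.1, s.1.2.1 - s.2.2.1))))
  left_inv := by rintro ⟨u₂, v₂, ⟨y₁, y₂⟩, u₁, v₁⟩; simp
  right_inv := by rintro ⟨⟨x₁, w₁, y₁⟩, x₂, w₂, y₂⟩; simp

/-- Equiv used for the output marginal of the `+` transform. -/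
def eqv2 (M : MAC q) :
    (ZMod q × ((M.Y × M.Y) × ZMod q × ZMod q)) ≃
      (ZMod q × ((ZMod q × M.Y) × (ZMod q × M.Y))) where
  toFun b := (b.2.2.1, ((b.2.2.2 + b.1, b.2.1.1), (b.1, b.2.1.2)))
  invFun s := (s.2.2.1, ((s.2.1.2, s.2.2.2), (s.1, s.2.1.1 - s.2.2.1)))
  left_inv := by rintro ⟨v₂, ⟨y₁, y₂⟩, u₁, v₁⟩; simp
  right_inv := by rintro ⟨u₁, ⟨w₁, y₁⟩, w₂, y₂⟩; simp

/-- Equiv used for the input marginal of the `+` transform (for fixed `u₂`). -/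
def eqv3 (M : MAC q) (u₂ : ZMod q) :
    (ZMod q × ((M.Y × M.Y) × ZMod q × ZMod q)) ≃
      ((ZMod q × (ZMod q × M.Y)) × (ZMod q × M.Y)) where
  toFun b := ((b.2.2.1 + u₂, (b.2.2.2 + b.1, b.2.1.1)), (b.1, b.2.1.2))
  invFun s := (s.2.1, ((s.1.2.2, s.2.2), (s.1.1 - u₂, s.1.2.1 - s.2.1)))
  left_inv := by rintro ⟨v₂, ⟨y₁, y₂⟩, u₁, v₁⟩; simp
  right_inv := by rintro ⟨⟨x₁, w₁, y₁⟩, w₂, y₂⟩; simp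

lemma plus_pointwise (u₂ : ZMod q) (b : ZMod q × ((M.Y × M.Y) × ZMod q × ZMod q)) :
    (plusT q M).P u₂ b.1 b.2 / (q:ℝ)^2
      = jP M (b.2.2.1 + u₂, (b.2.2.2 + b.1, b.2.1.1)) * jP M (u₂, (b.1, b.2.1.2)) := by
  obtain ⟨v₂, ⟨y₁, y₂⟩, u₁, v₁⟩ := b
  show ((q : ℝ) ^ 2)⁻¹ * (M.P (u₁ + u₂) (v₁ + v₂) y₁ * M.P u₂ v₂ y₂) / (q:ℝ)^2
    = (M.P (u₁ + u₂) (v₁ + v₂) y₁ / (q:ℝ)^2) * (M.P u₂ v₂ y₂ / (q:ℝ)^2)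
  have hq := q_ne_zero q
  field_simp

/-- The function whose `MIq` is `I1 (plusT M)`. -/
noncomputable def Jf (M : MAC q) :
    ZMod q → (ZMod q × ((M.Y × M.Y) × ZMod q × ZMod q)) → ℝ :=
  fun u₂ b => (plusT q M).P u₂ b.1 b.2 / (q:ℝ)^2

lemma Jf_comp1 (hM : IsMAC M) (u₂ : ZMod q) : ∑ b, Jf M u₂ b = (q:ℝ)⁻¹ := by
  have h : ∀ b, Jf M u₂ b
      = (fun s : (ZMod q × (ZMod q × M.Y)) × (ZMod q × M.Y) => jP M s.1 * jP M (u₂, s.2))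
          ((eqv3 M u₂) b) := by
    intro b
    exact plus_pointwise M u₂ b
  rw [Fintype.sum_equiv (eqv3 M u₂) (Jf M u₂)
    (fun s : (ZMod q × (ZMod q × M.Y)) × (ZMod q × M.Y) => jP M s.1 * jP M (u₂, s.2)) h,
    Fintype.sum_prod_type]
  have : ∀ s1 : ZMod q × (ZMod q × M.Y), ∑ z : ZMod q × M.Y, jP M s1 * jP M (u₂, z)
      = jP M s1 * (q:ℝ)⁻¹ := by
    intro s1
    rw [← Finset.mul_sum]
    congr 1
    exact jP_row M hM u₂
  simp only [this]
  rw [← Finset.sum_mul, jP_total M hM, one_mul]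

lemma Jf_joint_ent (hM : IsMAC M) :
    ent (fun t : ZMod q × (ZMod q × ((M.Y × M.Y) × ZMod q × ZMod q)) => Jf M t.1 t.2)
      = 2 * ent (jP M) := by
  have h : (fun t : ZMod q × (ZMod q × ((M.Y × M.Y) × ZMod q × ZMod q)) => Jf M t.1 t.2)
      = fun t => (fun s : (ZMod q × (ZMod q × M.Y)) × (ZMod q × (ZMod q × M.Y)) =>
          jP M s.1 * jP M s.2) ((eqvG M) t) := by
    funext t
    obtain ⟨u₂, b⟩ := t
    exact plus_pointwise M u₂ b
  rw [h, ent_comp_equiv (eqvG M)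
      (fun s : (ZMod q × (ZMod q × M.Y)) × (ZMod q × (ZMod q × M.Y)) => jP M s.1 * jP M s.2),
    ent_prod (jP M) (jP M) (jP_total M hM) (jP_total M hM)]
  ring

/-- The reshaped output marginal of the `+` transform. -/
noncomputable def Rf (M : MAC q) : ZMod q × ((ZMod q × M.Y) × (ZMod q × M.Y)) → ℝ :=
  fun s => ∑ u₂, jP M (s.1 + u₂, s.2.1) * jP M (u₂, s.2.2)

lemma Rf_nonneg (hM : IsMAC M) (s) : 0 ≤ Rf M s :=
  Finset.sum_nonneg fun u₂ _ => mul_nonneg (jP_nonneg M hM _) (jP_nonneg M hM _)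

lemma Rf_marg (hM : IsMAC M) (zz : (ZMod q × M.Y) × (ZMod q × M.Y)) :
    ∑ u₁, Rf M (u₁, zz) = mg M zz.1 * mg M zz.2 := by
  haveI : NeZero q := ⟨(Fact.out : Nat.Prime q).ne_zero⟩
  unfold Rf
  rw [Finset.sum_comm]
  have : ∀ u₂ : ZMod q, ∑ u₁ : ZMod q, jP M (u₁ + u₂, zz.1) * jP M (u₂, zz.2)
      = mg M zz.1 * jP M (u₂, zz.2) := by
    intro u₂
    rw [← Finset.sum_mul]
    congr 1
    exact Fintype.sum_equiv (Equiv.addRight u₂) _ _ (fun _ => rfl)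
  simp only [this]
  rw [← Finset.mul_sum]
  rfl

lemma cm_eq : (fun b => ∑ u₂, Jf M u₂ b) = fun b => Rf M ((eqv2 M) b) := by
  funext b
  refine Finset.sum_congr rfl fun u₂ _ => ?_
  have := plus_pointwise M u₂ b
  exact this

lemma Rf_pst (hM : IsMAC M) {zz : (ZMod q × M.Y) × (ZMod q × M.Y)} (h : (∑ u₁, Rf M (u₁, zz)) ≠ 0)
    (u : ZMod q) :
    cnv (pst M zz.1) (pst M zz.2) u = Rf M (u, zz) / (∑ u₁, Rf M (u₁, zz)) := by
  rw [Rf_marg M hM] at h ⊢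
  have h1 : mg M zz.1 ≠ 0 := fun hh => h (by rw [hh, zero_mul])
  have h2 : mg M zz.2 ≠ 0 := fun hh => h (by rw [hh, mul_zero])
  unfold cnv Rf
  simp only [pst_eq M h1, pst_eq M h2]
  rw [Finset.sum_div]
  refine Finset.sum_congr rfl fun x _ => ?_
  rw [div_mul_div_comm]

lemma ent_Rf (hM : IsMAC M) : ent (Rf M) = 2 * ent (mg M) + Ecv M := by
  have hdec := ent_decomp (Rf M) (Rf_nonneg M hM)
    (fun zz => cnv (pst M zz.1) (pst M zz.2)) (fun zz h u => Rf_pst M hM h u)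
  have hmarg : (fun zz => ∑ u₁, Rf M (u₁, zz))
      = fun zz : (ZMod q × M.Y) × (ZMod q × M.Y) => mg M zz.1 * mg M zz.2 :=
    funext fun zz => Rf_marg M hM zz
  rw [hdec, hmarg, ent_prod (mg M) (mg M) (mg_sum M hM) (mg_sum M hM)]
  have hsum : ∑ zz : (ZMod q × M.Y) × (ZMod q × M.Y),
      (∑ u₁, Rf M (u₁, zz)) * ent (cnv (pst M zz.1) (pst M zz.2)) = Ecv M := by
    unfold Ecv
    rw [Fintype.sum_prod_type]
    refine Finset.sum_congr rfl fun z₁ _ => Finset.sum_congr rfl fun z₂ _ => ?_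
    rw [Rf_marg M hM]
  rw [hsum]
  ring

lemma I1_plus_eq (hM : IsMAC M) :
    I1 q (plusT q M) = 1 + (Ecv M - 2 * E1e M) / Real.log q := by
  have hlog := log_q_pos q
  have e1 : Hq q (fun a : ZMod q =>
      ∑ wy : ZMod q × (plusT q M).Y, (plusT q M).P a wy.1 wy.2 / (q:ℝ)^2) = 1 := by
    have hfun : (fun a : ZMod q =>
        ∑ wy : ZMod q × (plusT q M).Y, (plusT q M).P a wy.1 wy.2 / (q:ℝ)^2)
        = fun _ : ZMod q => (q:ℝ)⁻¹ := funext fun a => Jf_comp1 M hM a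
    rw [hfun, Hq_uniform q]
  have e2 : Hq q (fun wy : ZMod q × (plusT q M).Y =>
      ∑ a : ZMod q, (plusT q M).P a wy.1 wy.2 / (q:ℝ)^2)
      = (2 * ent (mg M) + Ecv M) / Real.log q := by
    have h1 : (fun wy : ZMod q × (plusT q M).Y =>
        ∑ a : ZMod q, (plusT q M).P a wy.1 wy.2 / (q:ℝ)^2)
        = fun b => Rf M ((eqv2 M) b) := cm_eq M
    rw [h1]
    show Hq q (fun b : ZMod q × ((M.Y × M.Y) × ZMod q × ZMod q) => Rf M ((eqv2 M) b)) = _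
    rw [Hq_ent, ent_comp_equiv (eqv2 M) (Rf M), ent_Rf M hM]
  have e3 : Hq q (fun ab : ZMod q × (ZMod q × (plusT q M).Y) =>
      (plusT q M).P ab.1 ab.2.1 ab.2.2 / (q:ℝ)^2)
      = (2 * ent (jP M)) / Real.log q := by
    have h1 : (fun ab : ZMod q × (ZMod q × (plusT q M).Y) =>
        (plusT q M).P ab.1 ab.2.1 ab.2.2 / (q:ℝ)^2)
        = fun t : ZMod q × (ZMod q × ((M.Y × M.Y) × ZMod q × ZMod q)) =>
            (fun s : (ZMod q × (ZMod q × M.Y)) × (ZMod q × (ZMod q × M.Y)) =>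
              jP M s.1 * jP M s.2) ((eqvG M) t) := by
      funext t
      exact plus_pointwise M t.1 t.2
    rw [h1]
    show Hq q (fun t : ZMod q × (ZMod q × ((M.Y × M.Y) × ZMod q × ZMod q)) =>
      (fun s : (ZMod q × (ZMod q × M.Y)) × (ZMod q × (ZMod q × M.Y)) =>
        jP M s.1 * jP M s.2) ((eqvG M) t)) = _
    rw [Hq_ent, ent_comp_equiv (eqvG M)
        (fun s : (ZMod q × (ZMod q × M.Y)) × (ZMod q × (ZMod q × M.Y)) => jP M s.1 * jP M s.2),
      ent_prod (jP M) (jP M) (jP_total M hM) (jP_total M hM)]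
    ring
  show Hq q _ + Hq q _ - Hq q _ = _
  rw [e1, e2, e3, ent_jP M hM]
  unfold E1e
  field_simp
  ring

end macsec


section gapsec
variable {q : ℕ} [Fact (Nat.Prime q)]

lemma I1_gap_bound (q : ℕ) [Fact (Nat.Prime q)] (ε : ℝ) (hε : 0 < ε) :
    ∃ δ > 0, ∀ M : MAC q, IsMAC M →
      I1 q M ∈ Set.Ioo ε (1 - ε) → δ ≤ I1 q (plusT q M) - I1 q M := by
  classical
  have hlog := log_q_pos q
  obtain ⟨c, hc, hgap⟩ := exists_uniform_gap (q := q) ((1 - ε/2) * Real.log q) ((ε/2) * Real.log q)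
    (by nlinarith) (by positivity)
  refine ⟨(ε/2)^2 * c / Real.log q, by positivity, fun M hM hmem => ?_⟩
  have hhalf : ε < 1/2 := by
    have h1 := hmem.1
    have h2 := hmem.2
    simp only [Set.mem_Ioo] at *
    linarith
  have hI1 := I1_eq M hM
  have hE1lt : E1e M ≤ (1 - ε) * Real.log q := by
    have h1 := hmem.1
    rw [hI1] at h1
    have : E1e M / Real.log q < 1 - ε := by linarith
    have := (div_lt_iff₀ hlog).1 this
    linarith
  have hE1gt : ε * Real.log q ≤ E1e M := by
    have h2 := hmem.2
    rw [hI1] at h2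
    have : ε < E1e M / Real.log q := by linarith
    have := (lt_div_iff₀ hlog).1 this
    linarith
  set A : Finset (ZMod q × M.Y) :=
    Finset.univ.filter (fun z => ent (pst M z) ≤ (1 - ε/2) * Real.log q) with hA
  set B : Finset (ZMod q × M.Y) :=
    Finset.univ.filter (fun z => (ε/2) * Real.log q ≤ ent (pst M z)) with hB
  have hSA : ε/2 ≤ ∑ z ∈ A, mg M z := by
    have hm := markov_upper (mg M) (fun z => ent (pst M z)) (mg_nonneg M hM) (mg_sum M hM)
      (fun z => ent_nonneg (pst_pmf M hM z))
      (c := (1 - ε/2) * Real.log q) (m := (1 - ε) * Real.log q)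
      (by nlinarith) hE1lt
    have hkey : 1 - ((1 - ε) * Real.log q) / ((1 - ε/2) * Real.log q) ≥ ε/2 := by
      have heq : ((1 - ε) * Real.log q) / ((1 - ε/2) * Real.log q) = (1 - ε)/(1 - ε/2) :=
        mul_div_mul_right _ _ (ne_of_gt hlog)
      rw [heq]
      have hden : 0 < 1 - ε/2 := by linarith
      have : (1 - ε)/(1 - ε/2) ≤ 1 - ε/2 := by
        rw [div_le_iff₀ hden]
        nlinarith
      linarith
    exact le_trans hkey hm
  have hSB : ε/2 ≤ ∑ z ∈ B, mg M z := by
    have hm := markov_lower (mg M) (fun z => ent (pst M z)) (mg_nonneg M hM) (mg_sum M hM)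
      (L := Real.log q) (c := (ε/2) * Real.log q) (m := ε * Real.log q)
      (fun z => ent_nonneg (pst_pmf M hM z)) (fun z => ent_le_log (pst_pmf M hM z))
      (by positivity) hlog hE1gt
    have heq : (ε * Real.log q - (ε/2) * Real.log q) / Real.log q = ε/2 := by
      field_simp
      ring
    rw [heq] at hm
    exact hm
  -- the main double-sum bound
  have hGnn : ∀ z₁ z₂ : ZMod q × M.Y, 0 ≤ mg M z₁ * mg M z₂ *
      (ent (cnv (pst M z₁) (pst M z₂)) - ent (pst M z₁)) := fun z₁ z₂ =>
    mul_nonneg (mul_nonneg (mg_nonneg M hM z₁) (mg_nonneg M hM z₂))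
      (sub_nonneg.2 (ent_le_cnv_left (pst_pmf M hM z₁) (pst_pmf M hM z₂)))
  have hdiff : Ecv M - E1e M = ∑ z₁, ∑ z₂, mg M z₁ * mg M z₂ *
      (ent (cnv (pst M z₁) (pst M z₂)) - ent (pst M z₁)) := by
    have hE1' : E1e M = ∑ z₁, ∑ z₂, mg M z₁ * mg M z₂ * ent (pst M z₁) := by
      unfold E1e
      refine Finset.sum_congr rfl fun z₁ _ => ?_
      calc mg M z₁ * ent (pst M z₁)
          = (mg M z₁ * ent (pst M z₁)) * ∑ z₂, mg M z₂ := by rw [mg_sum M hM, mul_one]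
        _ = ∑ z₂, mg M z₁ * mg M z₂ * ent (pst M z₁) := by
            rw [Finset.mul_sum]
            exact Finset.sum_congr rfl fun z₂ _ => by ring
    unfold Ecv
    rw [hE1', ← Finset.sum_sub_distrib]
    refine Finset.sum_congr rfl fun z₁ _ => ?_
    rw [← Finset.sum_sub_distrib]
    exact Finset.sum_congr rfl fun z₂ _ => by ring
  have hrestrict : ∑ z₁ ∈ A, ∑ z₂ ∈ B, mg M z₁ * mg M z₂ *
      (ent (cnv (pst M z₁) (pst M z₂)) - ent (pst M z₁))
      ≤ ∑ z₁, ∑ z₂, mg M z₁ * mg M z₂ *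
      (ent (cnv (pst M z₁) (pst M z₂)) - ent (pst M z₁)) := by
    calc ∑ z₁ ∈ A, ∑ z₂ ∈ B, mg M z₁ * mg M z₂ *
        (ent (cnv (pst M z₁) (pst M z₂)) - ent (pst M z₁))
        ≤ ∑ z₁ ∈ A, ∑ z₂, mg M z₁ * mg M z₂ *
          (ent (cnv (pst M z₁) (pst M z₂)) - ent (pst M z₁)) := by
          refine Finset.sum_le_sum fun z₁ _ => ?_
          exact Finset.sum_le_sum_of_subset_of_nonneg (Finset.filter_subset _ _)
            (fun z₂ _ _ => hGnn z₁ z₂)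
      _ ≤ _ := Finset.sum_le_sum_of_subset_of_nonneg (Finset.filter_subset _ _)
          (fun z₁ _ _ => Finset.sum_nonneg fun z₂ _ => hGnn z₁ z₂)
  have hterm : ∀ z₁ ∈ A, ∀ z₂ ∈ B, mg M z₁ * mg M z₂ * c ≤ mg M z₁ * mg M z₂ *
      (ent (cnv (pst M z₁) (pst M z₂)) - ent (pst M z₁)) := by
    intro z₁ hz₁ z₂ hz₂
    have h₁ : ent (pst M z₁) ≤ (1 - ε/2) * Real.log q := (Finset.mem_filter.1 hz₁).2
    have h₂ : (ε/2) * Real.log q ≤ ent (pst M z₂) := (Finset.mem_filter.1 hz₂).2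
    have := hgap (pst M z₁) (pst M z₂) (pst_pmf M hM z₁) (pst_pmf M hM z₂) h₁ h₂
    refine mul_le_mul_of_nonneg_left ?_
      (mul_nonneg (mg_nonneg M hM z₁) (mg_nonneg M hM z₂))
    linarith
  have hABsum : ∑ z₁ ∈ A, ∑ z₂ ∈ B, mg M z₁ * mg M z₂ * c
      = (∑ z₁ ∈ A, mg M z₁) * (∑ z₂ ∈ B, mg M z₂) * c := by
    rw [Finset.sum_mul, Finset.sum_mul]
    refine Finset.sum_congr rfl fun z₁ _ => ?_
    rw [Finset.mul_sum, Finset.sum_mul]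
    all_goals exact Finset.sum_congr rfl fun z₂ _ => by ring
  have hmain : (ε/2)^2 * c ≤ Ecv M - E1e M := by
    rw [hdiff]
    have hSA0 : (0:ℝ) ≤ ∑ z₁ ∈ A, mg M z₁ := le_trans (by positivity) hSA
    have h1 : (ε/2)*(ε/2) ≤ (∑ z₁ ∈ A, mg M z₁) * (∑ z₂ ∈ B, mg M z₂) :=
      mul_le_mul hSA hSB (by positivity) hSA0
    have h2 := mul_le_mul_of_nonneg_right h1 hc.le
    calc (ε/2)^2 * c ≤ (∑ z₁ ∈ A, mg M z₁) * (∑ z₂ ∈ B, mg M z₂) * c := by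
          calc (ε/2)^2 * c = (ε/2)*(ε/2)*c := by ring
            _ ≤ _ := h2
      _ = ∑ z₁ ∈ A, ∑ z₂ ∈ B, mg M z₁ * mg M z₂ * c := hABsum.symm
      _ ≤ ∑ z₁ ∈ A, ∑ z₂ ∈ B, mg M z₁ * mg M z₂ *
          (ent (cnv (pst M z₁) (pst M z₂)) - ent (pst M z₁)) := by
          refine Finset.sum_le_sum fun z₁ hz₁ => Finset.sum_le_sum fun z₂ hz₂ => ?_
          exact hterm z₁ hz₁ z₂ hz₂
      _ ≤ _ := hrestrict
  have hgapeq : I1 q (plusT q M) - I1 q M = (Ecv M - E1e M) / Real.log q := by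
    rw [I1_plus_eq M hM, hI1]
    field_simp
    ring
  rw [hgapeq]
  exact div_le_div_of_nonneg_right hmain hlog.le

/-- The channel with the roles of the two users swapped. -/
def swapM (M : MAC q) : MAC q := { Y := M.Y, P := fun x w y => M.P w x y }

lemma isMAC_swap (M : MAC q) (hM : IsMAC M) : IsMAC (swapM M) :=
  ⟨fun x w y => hM.1 w x y, fun x w => hM.2 w x⟩

lemma I2_eq_I1_swap (M : MAC q) : I2 q M = I1 q (swapM M) := rfl

/-- Swapping `(u₁, v₁)` in the output of the `+` transform. -/
def eswp (M : MAC q) :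
    (ZMod q × ((M.Y × M.Y) × ZMod q × ZMod q)) ≃ (ZMod q × ((M.Y × M.Y) × ZMod q × ZMod q)) where
  toFun b := (b.1, (b.2.1, (b.2.2.2, b.2.2.1)))
  invFun b := (b.1, (b.2.1, (b.2.2.2, b.2.2.1)))
  left_inv := by rintro ⟨x, yy, u, v⟩; rfl
  right_inv := by rintro ⟨x, yy, u, v⟩; rfl

lemma MIq_comp_equiv {α β γ : Type*} [Fintype α] [Fintype β] [Fintype γ]
    (e : β ≃ γ) (p : α → γ → ℝ) :
    MIq q (fun a b => p a (e b)) = MIq q p := by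
  unfold MIq
  have h1 : (fun a : α => ∑ b, p a (e b)) = fun a => ∑ b, p a b :=
    funext fun a => Fintype.sum_equiv e _ _ fun _ => rfl
  have h2 : (Hq q fun b : β => ∑ a, p a (e b)) = Hq q fun b : γ => ∑ a, p a b :=
    Fintype.sum_equiv e _ _ fun _ => rfl
  have h3 : (Hq q fun ab : α × β => p ab.1 (e ab.2)) = Hq q fun ab : α × γ => p ab.1 ab.2 :=
    Fintype.sum_equiv ((Equiv.refl α).prodCongr e) _ _ fun _ => rfl
  rw [h1, h2, h3]

lemma I2_plus_eq (M : MAC q) : I2 q (plusT q M) = I1 q (plusT q (swapM M)) :=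
  MIq_comp_equiv (eswp M)
    (fun x (wy : ZMod q × (plusT q (swapM M)).Y) => (plusT q (swapM M)).P x wy.1 wy.2 / (q:ℝ)^2)

end gapsec


/-- **Corollary 1**: for every `ε > 0` there is `δ > 0` (depending only on `ε` and `q`)
such that for every MAC `P`: if `I⁽¹⁾(P⁺) - I⁽¹⁾(P) < δ` then `I⁽¹⁾(P) ∉ (ε, 1-ε)`,
and if `I⁽²⁾(P⁺) - I⁽²⁾(P) < δ` then `I⁽²⁾(P) ∉ (ε, 1-ε)`. -/
theorem small_increment_I1_I2 (q : ℕ) [Fact (Nat.Prime q)] (ε : ℝ) (hε : 0 < ε) :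
    ∃ δ > 0, ∀ M : MAC q, IsMAC M →
      (I1 q (plusT q M) - I1 q M < δ → I1 q M ∉ Set.Ioo ε (1 - ε)) ∧
      (I2 q (plusT q M) - I2 q M < δ → I2 q M ∉ Set.Ioo ε (1 - ε)) := by
  obtain ⟨δ, hδ, hbound⟩ := I1_gap_bound q ε hε
  refine ⟨δ, hδ, fun M hM => ⟨fun hlt hmem => ?_, fun hlt hmem => ?_⟩⟩
  · exact absurd hlt (not_lt.2 (hbound M hM hmem))
  · have h1 := I2_eq_I1_swap M
    have h2 := I2_plus_eq M
    have hmem' : I1 q (swapM M) ∈ Set.Ioo ε (1 - ε) := h1 ▸ hmem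
    have hge := hbound (swapM M) (isMAC_swap M hM) hmem'
    rw [h2, h1] at hlt
    exact absurd hlt (not_lt.2 hge)

end PolarMAC
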